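/- A connected simple undirected graph G = (V, E) with maximum degree at most 5 admits a partition of V into triangles if and only if the hypergraph ⌜G⌝ is generated by the bonding grammar TBG whose start hypergraphs are the triangle hypergraphs TH(k₁,k₂,k₃) for 0 ≤ k₁ ≤ k₂ ≤ k₃ ≤ 3, with N = {I,O}, T = {b}, and I ⊗ O = b. -/

import Mathlib

/-! ## Hypergraphs (over a label alphabet `Λ`), bonding, breaking bonds,
bonding grammars, following "Bonding Grammars" (Pshenitsyn). -/

structure BHypergraph (Λ : Type) where
  V : Finset ℕ
  E : Finset ℕ
  att : ℕ → List ℕ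
  lab : ℕ → Λ

namespace BHypergraph

variable {Λ : Type}

/-- Attachment vertices lie in `V` and attachment lengths agree with types. -/
def WellFormed (typ : Λ → ℕ) (H : BHypergraph Λ) : Prop :=
  (∀ e ∈ H.E, ∀ v ∈ H.att e, v ∈ H.V) ∧
  (∀ e ∈ H.E, (H.att e).length = typ (H.lab e))

def Adj (H : BHypergraph Λ) (u v : ℕ) : Prop :=
  ∃ e ∈ H.E, u ∈ H.att e ∧ v ∈ H.att e

/-- There is a path between `u` and `v` in `H`. -/
def HasPath (H : BHypergraph Λ) (u v : ℕ) : Prop :=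
  Relation.ReflTransGen H.Adj u v

def Connected (H : BHypergraph Λ) : Prop :=
  ∀ u ∈ H.V, ∀ v ∈ H.V, H.HasPath u v

/-- The degree of a vertex: the number of pairs `(e, i)` with
`att e ( i ) = v`, i.e. occurrences of `v` in attachment sequences. -/
def degree (H : BHypergraph Λ) (v : ℕ) : ℕ :=
  ∑ e ∈ H.E, (H.att e).count v

def degreeSet (H : BHypergraph Λ) : Set ℕ :=
  {d | ∃ v ∈ H.V, H.degree v = d}

def Isomorphic (H G : BHypergraph Λ) : Prop :=
  ∃ f g : ℕ → ℕ,
    Set.BijOn f ↑H.V ↑G.V ∧ Set.BijOn g ↑H.E ↑G.E ∧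
    ∀ e ∈ H.E, G.att (g e) = (H.att e).map f ∧ G.lab (g e) = H.lab e

end BHypergraph

/-- A single bonding step: two distinct hyperedges `e₁, e₂` whose labels can be
bonded are merged into a single new hyperedge `e'` with concatenated
attachment sequence and label `lab e₁ ⊗ lab e₂`. -/
def BondingStep {Λ : Type} (bond : Λ → Λ → Option Λ) (H H' : BHypergraph Λ) : Prop :=
  ∃ e₁ e₂ e' t,
    e₁ ∈ H.E ∧ e₂ ∈ H.E ∧ e₁ ≠ e₂ ∧ e' ∉ H.E ∧
    bond (H.lab e₁) (H.lab e₂) = some t ∧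
    H'.V = H.V ∧
    H'.E = (H.E \ {e₁, e₂}) ∪ {e'} ∧
    (∀ e ∈ H.E \ {e₁, e₂}, H'.att e = H.att e ∧ H'.lab e = H.lab e) ∧
    H'.att e' = H.att e₁ ++ H.att e₂ ∧
    H'.lab e' = t

/-- Breaking the bond `e'` (whose label is `A₁ ⊗ A₂`) of `H'`, introducing the
fresh hyperedges `e₁, e₂`, yields `H`. -/
def BreakBondAt {Λ : Type} (typ : Λ → ℕ) (bond : Λ → Λ → Option Λ)
    (H' H : BHypergraph Λ) (e' e₁ e₂ : ℕ) : Prop :=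
  ∃ A₁ A₂,
    e' ∈ H'.E ∧ e₁ ∉ H'.E ∧ e₂ ∉ H'.E ∧ e₁ ≠ e₂ ∧
    bond A₁ A₂ = some (H'.lab e') ∧
    H.V = H'.V ∧
    H.E = (H'.E \ {e'}) ∪ {e₁, e₂} ∧
    (∀ e ∈ H'.E \ {e'}, H.att e = H'.att e ∧ H.lab e = H'.lab e) ∧
    H.att e₁ = (H'.att e').take (typ A₁) ∧
    H.att e₂ = (H'.att e').drop (typ A₁) ∧
    H.lab e₁ = A₁ ∧ H.lab e₂ = A₂

def BreakBond {Λ : Type} (typ : Λ → ℕ) (bond : Λ → Λ → Option Λ)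
    (H' H : BHypergraph Λ) : Prop :=
  ∃ e' e₁ e₂, BreakBondAt typ bond H' H e' e₁ e₂

/-- `BreaksTo typ bond H l F`: starting from `H` and successively breaking the
bonds listed in `l` yields `F`. -/
def BreaksTo {Λ : Type} (typ : Λ → ℕ) (bond : Λ → Λ → Option Λ) :
    BHypergraph Λ → List ℕ → BHypergraph Λ → Prop
  | H, [], F => H = F
  | H, e :: l, F => ∃ H₁ e₁ e₂, BreakBondAt typ bond H H₁ e e₁ e₂ ∧ BreaksTo typ bond H₁ l F

/-- `H` is a disjoint union of copies of hypergraphs from `Zs`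
(this plays the role of `m · Z`). -/
def IsUnionOfCopies {Λ : Type} (Zs : Set (BHypergraph Λ)) (H : BHypergraph Λ) : Prop :=
  ∃ (n : ℕ) (cV cE : ℕ → ℕ),
    (∀ v ∈ H.V, cV v < n) ∧ (∀ e ∈ H.E, cE e < n) ∧
    (∀ e ∈ H.E, ∀ v ∈ H.att e, v ∈ H.V) ∧
    (∀ e ∈ H.E, ∀ v ∈ H.att e, cV v = cE e) ∧
    ∀ i < n, ∃ Z0 ∈ Zs, BHypergraph.Isomorphic
      ⟨H.V.filter (fun v => cV v = i), H.E.filter (fun e => cE e = i), H.att, H.lab⟩ Z0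

/-- `C` is a connected component of `H`. -/
def IsComponent {Λ : Type} (H C : BHypergraph Λ) : Prop :=
  C.V ⊆ H.V ∧ C.att = H.att ∧ C.lab = H.lab ∧ C.V.Nonempty ∧
  (∀ u ∈ C.V, ∀ v ∈ H.V, (H.HasPath u v ↔ v ∈ C.V)) ∧
  ∀ e, e ∈ C.E ↔ (e ∈ H.E ∧ ∃ v ∈ H.att e, v ∈ C.V)

/-- Disjoint union of two hypergraphs (via an even/odd renaming). -/
def hsum {Λ : Type} (H K : BHypergraph Λ) : BHypergraph Λ :=
  ⟨H.V.image (fun v => 2 * v) ∪ K.V.image (fun v => 2 * v + 1),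
   H.E.image (fun e => 2 * e) ∪ K.E.image (fun e => 2 * e + 1),
   fun e => if e % 2 = 0 then (H.att (e / 2)).map (fun v => 2 * v)
            else (K.att (e / 2)).map (fun v => 2 * v + 1),
   fun e => if e % 2 = 0 then H.lab (e / 2) else K.lab (e / 2)⟩

/-- A bonding grammar: typed labels, nonterminal and terminal alphabets, a
partial bond function, and a tuple `Z` of start hypergraphs. -/
structure BondingGrammar (Λ : Type) where
  typ : Λ → ℕ
  N : Set Λ
  T : Set Λ
  bond : Λ → Λ → Option Λ
  k : ℕ
  Z : Fin k → BHypergraph Λ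

namespace BondingGrammar

variable {Λ : Type}

/-- Side conditions from the definition of a bonding grammar: `N` and `T` are
disjoint, the start hypergraphs are connected and well-formed, and the bond
function is a partial injective function `N × N ⇀ T` adding the types. -/
def WellFormed (G : BondingGrammar Λ) : Prop :=
  Disjoint G.N G.T ∧
  (∀ i, (G.Z i).Connected ∧ (G.Z i).WellFormed G.typ) ∧
  (∀ A₁ A₂ t, G.bond A₁ A₂ = some t →
    A₁ ∈ G.N ∧ A₂ ∈ G.N ∧ t ∈ G.T ∧ G.typ t = G.typ A₁ + G.typ A₂) ∧
  (∀ A₁ A₂ B₁ B₂ t, G.bond A₁ A₂ = some t → G.bond B₁ B₂ = some t →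
    A₁ = B₁ ∧ A₂ = B₂)

def ZSet (G : BondingGrammar Λ) : Set (BHypergraph Λ) :=
  {Z0 | ∃ i, Z0 = G.Z i}

/-- `G` generates `H` if some `m · Z` derives `H` by bonding steps. -/
def Generates (G : BondingGrammar Λ) (H : BHypergraph Λ) : Prop :=
  ∃ H₀, IsUnionOfCopies G.ZSet H₀ ∧
    Relation.ReflTransGen (BondingStep G.bond) H₀ H

/-- The language of `G`: generated hypergraphs all of whose labels are terminal. -/
def Lang (G : BondingGrammar Λ) : Set (BHypergraph Λ) :=
  {H | G.Generates H ∧ ∀ e ∈ H.E, H.lab e ∈ G.T}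

end BondingGrammar

/-! Finite undirected graphs, given by a Boolean adjacency function, and
partitions into triangles. -/

/-- `TriPart adj`: the vertex set can be partitioned into 3-element sets of
pairwise adjacent vertices. -/
def TriPart {n : ℕ} (adj : Fin n → Fin n → Bool) : Prop :=
  ∃ P : Finset (Finset (Fin n)),
    (∀ t ∈ P, t.card = 3 ∧ ∀ u ∈ t, ∀ v ∈ t, u ≠ v → adj u v = true) ∧
    ∀ v : Fin n, ∃! t, t ∈ P ∧ v ∈ t

/-- A graph instance: a number of vertices together with an adjacency function. -/
def GraphInst : Type := Σ n : ℕ, Fin n → Fin n → Bool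

/-- The adjacency function is symmetric and irreflexive (simple undirected graph). -/
def GoodGraph (x : GraphInst) : Prop :=
  (∀ u v, x.2 u v = x.2 v u) ∧ (∀ v, x.2 v v = false)

def degLe (x : GraphInst) (k : ℕ) : Prop :=
  ∀ v, (Finset.univ.filter (fun u => x.2 v u = true)).card ≤ k

def ConnG (x : GraphInst) : Prop :=
  ∀ u v : Fin x.1, Relation.ReflTransGen (fun a b => x.2 a b = true) u v

/-- Partition into triangles for graphs of maximum degree 4 (NP-complete by
van Rooij et al.). -/
def PiT4 (x : GraphInst) : Prop :=
  GoodGraph x ∧ degLe x 4 ∧ TriPart x.2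

/-- Problem 5Conn-PiT: partition into triangles for connected graphs of
maximum degree at most 5. -/
def PiT5conn (x : GraphInst) : Prop :=
  GoodGraph x ∧ ConnG x ∧ degLe x 5 ∧ TriPart x.2

/-! The bonding grammar `TBG` built from triangle hypergraphs, and the encoding
`⌜G⌝` of a simple undirected graph as a hypergraph. -/

inductive Lab : Type
  | I | O | b
deriving DecidableEq

def typLab : Lab → ℕ
  | .I => 1 | .O => 1 | .b => 2

def bondLab : Lab → Lab → Option Lab
  | .I, .O => some .b
  | _, _ => none

/-- `TH k₁ k₂ k₃`: the triangle graph on vertices `0,1,2` (each pair joined by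
a pair of oppositely directed `b`-edges), with `kᵢ` additional `I`-labelled and
`kᵢ` additional `O`-labelled type-1 hyperedges attached to vertex `i`. -/
def TH (k₁ k₂ k₃ : ℕ) : BHypergraph Lab :=
  ⟨{0, 1, 2},
   Finset.range (6 + 2 * k₁ + 2 * k₂ + 2 * k₃),
   fun e =>
     if e = 0 then [0, 1] else if e = 1 then [1, 0]
     else if e = 2 then [1, 2] else if e = 3 then [2, 1]
     else if e = 4 then [0, 2] else if e = 5 then [2, 0]
     else if e < 6 + 2 * k₁ then [0]
     else if e < 6 + 2 * k₁ + 2 * k₂ then [1] else [2],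
   fun e =>
     if e < 6 then Lab.b
     else if e < 6 + 2 * k₁ then (if e < 6 + k₁ then Lab.I else Lab.O)
     else if e < 6 + 2 * k₁ + 2 * k₂ then
       (if e < 6 + 2 * k₁ + k₂ then Lab.I else Lab.O)
     else (if e < 6 + 2 * k₁ + 2 * k₂ + k₃ then Lab.I else Lab.O)⟩

/-- The grammar `TBG` whose start tuple consists of all `TH k₁ k₂ k₃` with
`0 ≤ k₁ ≤ k₂ ≤ k₃ ≤ 3` (indexed, with harmless repetitions, by sorting the
base-4 digits of the index). -/
def TBG : BondingGrammar Lab :=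
  { typ := typLab, N := {Lab.I, Lab.O}, T := {Lab.b}, bond := bondLab,
    k := 64,
    Z := fun i =>
      let a := (i : ℕ) % 4
      let b := ((i : ℕ) / 4) % 4
      let c := (i : ℕ) / 16
      TH (min a (min b c)) (a + b + c - min a (min b c) - max a (max b c))
        (max a (max b c)) }

/-- The hypergraph `⌜G⌝` encoding a simple undirected graph: vertices `0,…,n-1`,
and for each adjacent pair `(u,v)` a `b`-labelled directed edge with attachment
`[u, v]` (so each undirected edge yields two hyperedges, one per direction). -/
def graphToHG (n : ℕ) (adj : Fin n → Fin n → Bool) : BHypergraph Lab :=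
  ⟨Finset.range n,
   (Finset.univ.filter (fun p : Fin n × Fin n => adj p.1 p.2 = true)).image
     (fun p => (p.1 : ℕ) * n + (p.2 : ℕ)),
   fun e => [e / n, e % n],
   fun _ => Lab.b⟩

section Helpers

lemma bondLab_eq {x y t : Lab} (h : bondLab x y = some t) :
    x = .I ∧ y = .O ∧ t = .b := by
  cases x <;> cases y <;> simp_all [bondLab]

lemma encdiv {n : ℕ} (u w : ℕ) (hw : w < n) :
    (u * n + w) / n = u ∧ (u * n + w) % n = w := by
  have hn : 0 < n := lt_of_le_of_lt (Nat.zero_le _) hw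
  constructor
  · rw [mul_comm, Nat.mul_add_div hn, Nat.div_eq_of_lt hw, add_zero]
  · rw [mul_comm, Nat.mul_add_mod, Nat.mod_eq_of_lt hw]

/-- b-labelled edges survive bonding with the same attachment. -/
def Pres (H K : BHypergraph Lab) : Prop :=
  H.V = K.V ∧ ∀ e ∈ H.E, H.lab e = Lab.b →
    e ∈ K.E ∧ K.att e = H.att e ∧ K.lab e = Lab.b

lemma pres_step {H K : BHypergraph Lab} (h : BondingStep bondLab H K) : Pres H K := by
  obtain ⟨e₁, e₂, e', t, he₁, he₂, hne, hnew, hbond, hV, hE, hkeep, hatt', hlab'⟩ := h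
  obtain ⟨hI, hO, ht⟩ := bondLab_eq hbond
  refine ⟨hV.symm, fun e he hb => ?_⟩
  have hne1 : e ≠ e₁ := by rintro rfl; rw [hb] at hI; exact Lab.noConfusion hI
  have hne2 : e ≠ e₂ := by rintro rfl; rw [hb] at hO; exact Lab.noConfusion hO
  have hmem : e ∈ H.E \ {e₁, e₂} := by
    simp [Finset.mem_sdiff, he, hne1, hne2]
  obtain ⟨ha, hl⟩ := hkeep e hmem
  exact ⟨by rw [hE]; exact Finset.mem_union_left _ hmem, ha, by rw [hl, hb]⟩

lemma pres_rtg {H K : BHypergraph Lab}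
    (h : Relation.ReflTransGen (BondingStep bondLab) H K) : Pres H K := by
  induction h with
  | refl => exact ⟨rfl, fun e he hb => ⟨he, rfl, hb⟩⟩
  | tail hs hstep ih =>
      obtain ⟨ihV, ihE⟩ := ih
      obtain ⟨sV, sE⟩ := pres_step hstep
      refine ⟨ihV.trans sV, fun e he hb => ?_⟩
      obtain ⟨h1, h2, h3⟩ := ihE e he hb
      obtain ⟨h4, h5, h6⟩ := sE e h1 h3
      exact ⟨h4, by rw [h5, h2], h6⟩

lemma TBG_Z_eq (j : Fin 64) : ∃ k1 k2 k3, TBG.Z j = TH k1 k2 k3 := ⟨_, _, _, rfl⟩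

lemma TH_pair_edge (k1 k2 k3 s r : ℕ) (hs : s < 3) (hr : r < 3) (hsr : s ≠ r) :
    ∃ c ∈ (TH k1 k2 k3).E, (TH k1 k2 k3).att c = [s, r] ∧
      (TH k1 k2 k3).lab c = Lab.b := by
  have hE : ∀ c : ℕ, c < 6 → c ∈ (TH k1 k2 k3).E := by
    intro c hc; simp only [TH, Finset.mem_range]; omega
  interval_cases s <;> interval_cases r
  · exact absurd rfl hsr
  · exact ⟨0, hE 0 (by norm_num), by simp [TH], by simp [TH]⟩
  · exact ⟨4, hE 4 (by norm_num), by simp [TH], by simp [TH]⟩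
  · exact ⟨1, hE 1 (by norm_num), by simp [TH], by simp [TH]⟩
  · exact absurd rfl hsr
  · exact ⟨2, hE 2 (by norm_num), by simp [TH], by simp [TH]⟩
  · exact ⟨5, hE 5 (by norm_num), by simp [TH], by simp [TH]⟩
  · exact ⟨3, hE 3 (by norm_num), by simp [TH], by simp [TH]⟩
  · exact absurd rfl hsr

lemma reverse_dir (n : ℕ) (adj : Fin n → Fin n → Bool)
    (h : BondingGrammar.Generates TBG (graphToHG n adj)) : TriPart adj := by
  obtain ⟨H₀, ⟨m, cV, cE, h1, h2, h3, h4, h5⟩, hchain⟩ := h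
  obtain ⟨hVeq, hEinc⟩ := pres_rtg hchain
  have hV0 : H₀.V = Finset.range n := hVeq
  -- every b-edge of H₀ witnesses adjacency in the graph
  have key : ∀ e ∈ H₀.E, H₀.lab e = Lab.b → ∀ x y (hx : x < n) (hy : y < n),
      H₀.att e = [x, y] → adj ⟨x, hx⟩ ⟨y, hy⟩ = true := by
    intro e he hb x y hx hy hatt
    obtain ⟨heG, hattG, _⟩ := hEinc e he hb
    simp only [graphToHG, Finset.mem_image, Finset.mem_filter, Finset.mem_univ,
      true_and] at heG
    obtain ⟨p, hp, hpe⟩ := heG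
    have hd := encdiv (n := n) (p.1 : ℕ) (p.2 : ℕ) p.2.isLt
    have hattG' : [e / n, e % n] = [x, y] := by rw [← hatt, ← hattG]; rfl
    have hx' : (p.1 : ℕ) = x := by
      have := hattG'; rw [← hpe] at this; simp [hd.1, hd.2] at this; exact this.1
    have hy' : (p.2 : ℕ) = y := by
      have := hattG'; rw [← hpe] at this; simp [hd.1, hd.2] at this; exact this.2
    have e1 : p.1 = ⟨x, hx⟩ := Fin.ext hx'
    have e2 : p.2 = ⟨y, hy⟩ := Fin.ext hy'
    rw [← e1, ← e2]; exact hp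
  -- component analysis
  have comp : ∀ i < m, (H₀.V.filter (fun v => cV v = i)).card = 3 ∧
      (∀ x ∈ H₀.V.filter (fun v => cV v = i), ∀ y ∈ H₀.V.filter (fun v => cV v = i),
        x ≠ y → ∃ e ∈ H₀.E, H₀.att e = [x, y] ∧ H₀.lab e = Lab.b) := by
    intro i hi
    obtain ⟨Z0, ⟨j, rfl⟩, f, g, hfV, hgE, hagree⟩ := h5 i hi
    obtain ⟨k1, k2, k3, hZ⟩ := TBG_Z_eq j
    rw [hZ] at hfV hgE hagree
    have hTHV : (TH k1 k2 k3).V = ({0, 1, 2} : Finset ℕ) := rfl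
    constructor
    · have : (H₀.V.filter (fun v => cV v = i)).card = ({0,1,2} : Finset ℕ).card := by
        refine Finset.card_bij (fun a _ => f a) ?_ ?_ ?_
        · intro a ha
          have := hfV.1 (by exact_mod_cast ha)
          rw [hTHV] at this; exact_mod_cast this
        · intro a₁ ha₁ a₂ ha₂ hfa
          exact hfV.2.1 (by exact_mod_cast ha₁) (by exact_mod_cast ha₂) hfa
        · intro b hb
          obtain ⟨a, ha, hab⟩ := hfV.2.2 (by rw [hTHV]; exact_mod_cast hb)
          exact ⟨a, by exact_mod_cast ha, hab⟩
      rw [this]; decide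
    · intro x hx y hy hxy
      have hfx : f x ∈ ({0,1,2} : Finset ℕ) := by
        have := hfV.1 (by exact_mod_cast hx); rw [hTHV] at this; exact_mod_cast this
      have hfy : f y ∈ ({0,1,2} : Finset ℕ) := by
        have := hfV.1 (by exact_mod_cast hy); rw [hTHV] at this; exact_mod_cast this
      have hfne : f x ≠ f y := by
        intro hfe; exact hxy (hfV.2.1 (by exact_mod_cast hx) (by exact_mod_cast hy) hfe)
      have hfx3 : f x < 3 := by simp at hfx; omega
      have hfy3 : f y < 3 := by simp at hfy; omega
      obtain ⟨c, hcE, hcatt, hclab⟩ := TH_pair_edge k1 k2 k3 (f x) (f y) hfx3 hfy3 hfne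
      obtain ⟨e, heEf, hge⟩ := hgE.2.2 (by exact_mod_cast hcE)
      have heEf' : e ∈ H₀.E.filter (fun e => cE e = i) := by exact_mod_cast heEf
      have hagree' := hagree e (by exact_mod_cast heEf)
      rw [hge, hcatt] at hagree'
      have heE : e ∈ H₀.E := (Finset.mem_filter.1 heEf').1
      have hcEe : cE e = i := (Finset.mem_filter.1 heEf').2
      -- H₀.att e maps under f to [f x, f y]
      have hmap : (H₀.att e).map f = [f x, f y] := hagree'.1.symm
      have hlab : H₀.lab e = Lab.b := by rw [← hagree'.2]; exact hclab
      obtain ⟨x', y', hae⟩ : ∃ x' y', H₀.att e = [x', y'] := by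
        rcases hl : H₀.att e with _ | ⟨a, _ | ⟨b, _ | _⟩⟩ <;> rw [hl] at hmap <;>
          simp at hmap
        exact ⟨_, _, rfl⟩
      rw [hae] at hmap
      simp only [List.map_cons, List.map_nil, List.cons.injEq, and_true] at hmap
      have hx'mem : x' ∈ H₀.V.filter (fun v => cV v = i) := by
        have hxa : x' ∈ H₀.att e := by rw [hae]; simp
        exact Finset.mem_filter.2 ⟨h3 e heE x' hxa, by rw [h4 e heE x' hxa, hcEe]⟩
      have hy'mem : y' ∈ H₀.V.filter (fun v => cV v = i) := by
        have hya : y' ∈ H₀.att e := by rw [hae]; simp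
        exact Finset.mem_filter.2 ⟨h3 e heE y' hya, by rw [h4 e heE y' hya, hcEe]⟩
      have hx'' : x' = x := hfV.2.1 (by exact_mod_cast hx'mem) (by exact_mod_cast hx) hmap.1
      have hy'' : y' = y := hfV.2.1 (by exact_mod_cast hy'mem) (by exact_mod_cast hy) hmap.2
      exact ⟨e, heE, by rw [hae, hx'', hy''], hlab⟩
  -- build the triangle partition
  refine ⟨(Finset.range m).image
    (fun i => Finset.univ.filter (fun v : Fin n => cV (v : ℕ) = i)), ?_, ?_⟩
  · intro t ht
    obtain ⟨i, hi, rfl⟩ := Finset.mem_image.1 ht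
    rw [Finset.mem_range] at hi
    obtain ⟨hc3, hadj3⟩ := comp i hi
    have hbij : (Finset.univ.filter (fun v : Fin n => cV (v : ℕ) = i)).card =
        (H₀.V.filter (fun v => cV v = i)).card := by
      refine Finset.card_bij (fun v _ => (v : ℕ)) ?_ ?_ ?_
      · intro v hv
        rw [Finset.mem_filter] at hv ⊢
        exact ⟨by rw [hV0]; exact Finset.mem_range.2 v.isLt, hv.2⟩
      · intro v₁ _ v₂ _ hv; exact Fin.ext hv
      · intro x hx
        rw [Finset.mem_filter, hV0, Finset.mem_range] at hx
        exact ⟨⟨x, hx.1⟩, Finset.mem_filter.2 ⟨Finset.mem_univ _, hx.2⟩, rfl⟩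
    constructor
    · rw [hbij]; exact hc3
    · intro u hu v hv huv
      rw [Finset.mem_filter] at hu hv
      have hu' : (u : ℕ) ∈ H₀.V.filter (fun v => cV v = i) :=
        Finset.mem_filter.2 ⟨by rw [hV0]; exact Finset.mem_range.2 u.isLt, hu.2⟩
      have hv' : (v : ℕ) ∈ H₀.V.filter (fun v => cV v = i) :=
        Finset.mem_filter.2 ⟨by rw [hV0]; exact Finset.mem_range.2 v.isLt, hv.2⟩
      have hne : (u : ℕ) ≠ (v : ℕ) := fun hh => huv (Fin.ext hh)
      obtain ⟨e, he, hatt, hlab⟩ := hadj3 _ hu' _ hv' hne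
      have := key e he hlab (u : ℕ) (v : ℕ) u.isLt v.isLt hatt
      simpa using this
  · intro v
    have hvV : (v : ℕ) ∈ H₀.V := by rw [hV0]; exact Finset.mem_range.2 v.isLt
    have him : cV (v : ℕ) < m := h1 _ hvV
    refine ⟨Finset.univ.filter (fun u : Fin n => cV (u : ℕ) = cV (v : ℕ)), ⟨?_, ?_⟩, ?_⟩
    · exact Finset.mem_image.2 ⟨cV (v : ℕ), Finset.mem_range.2 him, rfl⟩
    · simp
    · rintro t' ⟨ht', hvt'⟩
      obtain ⟨i', _, rfl⟩ := Finset.mem_image.1 ht'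
      rw [Finset.mem_filter] at hvt'
      rw [← hvt'.2]

end Helpers

section Forward

variable (n : ℕ) (adj : Fin n → Fin n → Bool)

def enc2 (p : Fin n × Fin n) : ℕ := (p.1 : ℕ) * n + (p.2 : ℕ)

lemma enc2_lt (p : Fin n × Fin n) : enc2 n p < n * n := by
  have h1 : (p.1 : ℕ) + 1 ≤ n := p.1.isLt
  have h2 : (p.2 : ℕ) < n := p.2.isLt
  calc (p.1 : ℕ) * n + (p.2 : ℕ) < (p.1 : ℕ) * n + n := by omega
    _ = ((p.1 : ℕ) + 1) * n := by ring
    _ ≤ n * n := Nat.mul_le_mul_right n h1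

lemma enc2_div (p : Fin n × Fin n) : enc2 n p / n = (p.1 : ℕ) :=
  (encdiv _ _ p.2.isLt).1

lemma enc2_mod (p : Fin n × Fin n) : enc2 n p % n = (p.2 : ℕ) :=
  (encdiv _ _ p.2.isLt).2

lemma enc2_inj {p q : Fin n × Fin n} (h : enc2 n p = enc2 n q) : p = q := by
  have h1 : (p.1 : ℕ) = (q.1 : ℕ) := by
    rw [← enc2_div n p, ← enc2_div n q, h]
  have h2 : (p.2 : ℕ) = (q.2 : ℕ) := by
    rw [← enc2_mod n p, ← enc2_mod n q, h]
  exact Prod.ext (Fin.ext h1) (Fin.ext h2)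

def bE (S : Finset (Fin n × Fin n)) : Finset ℕ :=
  (Finset.univ.filter (fun p : Fin n × Fin n => adj p.1 p.2 = true ∧ p ∉ S)).image
    (enc2 n)

def iE (S : Finset (Fin n × Fin n)) : Finset ℕ :=
  S.image (fun p => n * n + 2 * enc2 n p)

def oE (S : Finset (Fin n × Fin n)) : Finset ℕ :=
  S.image (fun p => n * n + 2 * enc2 n p + 1)

lemma mem_bE {S e} : e ∈ bE n adj S ↔
    ∃ p : Fin n × Fin n, adj p.1 p.2 = true ∧ p ∉ S ∧ enc2 n p = e := by
  simp [bE, and_assoc]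

lemma mem_iE {S e} : e ∈ iE n S ↔ ∃ p ∈ S, n * n + 2 * enc2 n p = e := by
  simp [iE]

lemma mem_oE {S e} : e ∈ oE n S ↔ ∃ p ∈ S, n * n + 2 * enc2 n p + 1 = e := by
  simp [oE]

lemma bE_lt {S e} (h : e ∈ bE n adj S) : e < n * n := by
  obtain ⟨p, _, _, rfl⟩ := (mem_bE n adj).1 h; exact enc2_lt n p

lemma iE_spec {S e} (h : e ∈ iE n S) : n * n ≤ e ∧ (e - n * n) % 2 = 0 := by
  obtain ⟨p, _, rfl⟩ := (mem_iE n).1 h; omega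

lemma oE_spec {S e} (h : e ∈ oE n S) : n * n ≤ e ∧ (e - n * n) % 2 = 1 := by
  obtain ⟨p, _, rfl⟩ := (mem_oE n).1 h; omega

def attS (S : Finset (Fin n × Fin n)) : ℕ → List ℕ := fun e =>
  if e ∈ iE n S then [((e - n * n) / 2) / n]
  else if e ∈ oE n S then [((e - n * n) / 2) % n]
  else [e / n, e % n]

def labS (S : Finset (Fin n × Fin n)) : ℕ → Lab := fun e =>
  if e ∈ iE n S then .I else if e ∈ oE n S then .O else .b

def HS (S : Finset (Fin n × Fin n)) : BHypergraph Lab :=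
  ⟨Finset.range n, bE n adj S ∪ iE n S ∪ oE n S, attS n S, labS n S⟩

lemma HS_empty : HS n adj ∅ = graphToHG n adj := by
  have h2 : iE n (∅ : Finset (Fin n × Fin n)) = ∅ := rfl
  have h3 : oE n (∅ : Finset (Fin n × Fin n)) = ∅ := rfl
  have h1 : bE n adj ∅ = (Finset.univ.filter
      (fun p : Fin n × Fin n => adj p.1 p.2 = true)).image
      (fun p => (p.1 : ℕ) * n + (p.2 : ℕ)) := by
    unfold bE enc2; congr 1; ext p; simp
  simp only [HS, graphToHG, BHypergraph.mk.injEq]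
  refine ⟨trivial, ?_, ?_, ?_⟩
  · rw [h1, h2, h3]; simp
  · funext e; simp [attS, h2, h3]
  · funext e; simp [labS, h2, h3]

lemma mem_iE_erase {S : Finset (Fin n × Fin n)} {p x} :
    x ∈ iE n (S.erase p) ↔ x ∈ iE n S ∧ x ≠ n * n + 2 * enc2 n p := by
  constructor
  · intro h
    obtain ⟨q, hq, rfl⟩ := (mem_iE n).1 h
    rw [Finset.mem_erase] at hq
    refine ⟨(mem_iE n).2 ⟨q, hq.2, rfl⟩, fun hh => hq.1 (enc2_inj n ?_)⟩
    omega
  · rintro ⟨h, hne⟩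
    obtain ⟨q, hq, rfl⟩ := (mem_iE n).1 h
    refine (mem_iE n).2 ⟨q, Finset.mem_erase.2 ⟨fun hqp => hne (by rw [hqp]), hq⟩, rfl⟩

lemma mem_oE_erase {S : Finset (Fin n × Fin n)} {p x} :
    x ∈ oE n (S.erase p) ↔ x ∈ oE n S ∧ x ≠ n * n + 2 * enc2 n p + 1 := by
  constructor
  · intro h
    obtain ⟨q, hq, rfl⟩ := (mem_oE n).1 h
    rw [Finset.mem_erase] at hq
    refine ⟨(mem_oE n).2 ⟨q, hq.2, rfl⟩, fun hh => hq.1 (enc2_inj n ?_)⟩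
    omega
  · rintro ⟨h, hne⟩
    obtain ⟨q, hq, rfl⟩ := (mem_oE n).1 h
    refine (mem_oE n).2 ⟨q, Finset.mem_erase.2 ⟨fun hqp => hne (by rw [hqp]), hq⟩, rfl⟩

lemma mem_bE_erase {S : Finset (Fin n × Fin n)} {p x} (hp : p ∈ S)
    (hadj : adj p.1 p.2 = true) :
    x ∈ bE n adj (S.erase p) ↔ x ∈ bE n adj S ∨ x = enc2 n p := by
  constructor
  · intro h
    obtain ⟨q, hq1, hq2, rfl⟩ := (mem_bE n adj).1 h
    rw [Finset.mem_erase] at hq2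
    push_neg at hq2
    by_cases hqp : q = p
    · right; rw [hqp]
    · left; exact (mem_bE n adj).2 ⟨q, hq1, hq2 hqp, rfl⟩
  · rintro (h | rfl)
    · obtain ⟨q, hq1, hq2, rfl⟩ := (mem_bE n adj).1 h
      exact (mem_bE n adj).2 ⟨q, hq1, fun hh => hq2 (Finset.mem_of_mem_erase hh), rfl⟩
    · exact (mem_bE n adj).2 ⟨p, hadj, by simp, rfl⟩

lemma forward_step (S : Finset (Fin n × Fin n)) (p : Fin n × Fin n)
    (hp : p ∈ S) (hadj : adj p.1 p.2 = true) :
    BondingStep bondLab (HS n adj S) (HS n adj (S.erase p)) := by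
  have he1i : n * n + 2 * enc2 n p ∈ iE n S := (mem_iE n).2 ⟨p, hp, rfl⟩
  have he2o : n * n + 2 * enc2 n p + 1 ∈ oE n S := (mem_oE n).2 ⟨p, hp, rfl⟩
  have he2ni : n * n + 2 * enc2 n p + 1 ∉ iE n S := fun h => by
    have := iE_spec n h; omega
  have he'lt : enc2 n p < n * n := enc2_lt n p
  have he'ni : ∀ S', enc2 n p ∉ iE n S' := fun S' h => by
    have := iE_spec n h; omega
  have he'no : ∀ S', enc2 n p ∉ oE n S' := fun S' h => by
    have := oE_spec n h; omega
  refine ⟨n * n + 2 * enc2 n p, n * n + 2 * enc2 n p + 1, enc2 n p, Lab.b,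
    ?_, ?_, by omega, ?_, ?_, rfl, ?_, ?_, ?_, ?_⟩
  · exact Finset.mem_union_left _ (Finset.mem_union_right _ he1i)
  · exact Finset.mem_union_right _ he2o
  · -- e' ∉ E
    simp only [HS, Finset.mem_union]
    push_neg
    refine ⟨⟨fun h => ?_, he'ni S⟩, he'no S⟩
    obtain ⟨q, hq1, hq2, hqe⟩ := (mem_bE n adj).1 h
    exact hq2 (by rw [enc2_inj n hqe]; exact hp)
  · -- bond
    have l1 : labS n S (n * n + 2 * enc2 n p) = Lab.I := by simp [labS, he1i]
    have l2 : labS n S (n * n + 2 * enc2 n p + 1) = Lab.O := by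
      simp [labS, he2ni, he2o]
    show bondLab (labS n S _) (labS n S _) = some Lab.b
    rw [l1, l2]; rfl
  · -- edge set equation
    show bE n adj (S.erase p) ∪ iE n (S.erase p) ∪ oE n (S.erase p) = _
    ext x
    have f1 : x ∈ bE n adj S → x < n * n := bE_lt n adj
    have f2 : x ∈ iE n S → n * n ≤ x ∧ (x - n * n) % 2 = 0 := iE_spec n
    have f3 : x ∈ oE n S → n * n ≤ x ∧ (x - n * n) % 2 = 1 := oE_spec n
    simp only [HS, Finset.mem_union, Finset.mem_sdiff, Finset.mem_insert,
      Finset.mem_singleton, mem_bE_erase n adj hp hadj, mem_iE_erase n,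
      mem_oE_erase n]
    constructor
    · rintro (((hb | rfl) | ⟨hi, hne⟩) | ⟨ho, hne⟩)
      · exact Or.inl ⟨Or.inl (Or.inl hb), by have := f1 hb; omega⟩
      · exact Or.inr rfl
      · exact Or.inl ⟨Or.inl (Or.inr hi), by have := f2 hi; omega⟩
      · exact Or.inl ⟨Or.inr ho, by have := f3 ho; omega⟩
    · rintro (⟨((hb | hi) | ho), hne⟩ | rfl)
      · exact Or.inl (Or.inl (Or.inl hb))
      · exact Or.inl (Or.inr ⟨hi, fun h => hne (Or.inl h)⟩)
      · exact Or.inr ⟨ho, fun h => hne (Or.inr h)⟩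
      · exact Or.inl (Or.inl (Or.inr rfl))
  · -- att/lab preservation
    intro e he
    simp only [HS, Finset.mem_sdiff, Finset.mem_insert, Finset.mem_singleton] at he
    obtain ⟨_, hne⟩ := he
    push_neg at hne
    have hi : e ∈ iE n (S.erase p) ↔ e ∈ iE n S := by
      rw [mem_iE_erase n]; exact ⟨fun h => h.1, fun h => ⟨h, hne.1⟩⟩
    have ho : e ∈ oE n (S.erase p) ↔ e ∈ oE n S := by
      rw [mem_oE_erase n]; exact ⟨fun h => h.1, fun h => ⟨h, hne.2⟩⟩
    refine ⟨?_, ?_⟩ <;> simp only [HS, attS, labS, hi, ho]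
  · -- attachments of new edge
    show attS n (S.erase p) (enc2 n p) = attS n S _ ++ attS n S _
    have a1 : attS n (S.erase p) (enc2 n p) = [(p.1 : ℕ), (p.2 : ℕ)] := by
      simp [attS, he'ni _, he'no _, enc2_div, enc2_mod]
    have a2 : attS n S (n * n + 2 * enc2 n p) = [(p.1 : ℕ)] := by
      simp only [attS, if_pos he1i]
      rw [show n * n + 2 * enc2 n p - n * n = 2 * enc2 n p by omega]
      rw [show 2 * enc2 n p / 2 = enc2 n p by omega, enc2_div]
    have a3 : attS n S (n * n + 2 * enc2 n p + 1) = [(p.2 : ℕ)] := by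
      simp only [attS, if_neg he2ni, if_pos he2o]
      rw [show n * n + 2 * enc2 n p + 1 - n * n = 2 * enc2 n p + 1 by omega]
      rw [show (2 * enc2 n p + 1) / 2 = enc2 n p by omega, enc2_mod]
    rw [a1, a2, a3]; rfl
  · -- label of new edge
    show labS n (S.erase p) (enc2 n p) = Lab.b
    simp [labS, he'ni _, he'no _]

lemma forward_chain (S : Finset (Fin n × Fin n))
    (hS : ∀ p ∈ S, adj p.1 p.2 = true) :
    Relation.ReflTransGen (BondingStep bondLab) (HS n adj S) (HS n adj ∅) := by
  induction S using Finset.strongInduction with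
  | _ S ih =>
    rcases S.eq_empty_or_nonempty with rfl | ⟨p, hp⟩
    · exact Relation.ReflTransGen.refl
    · exact Relation.ReflTransGen.head (forward_step n adj S p hp (hS p hp))
        (ih (S.erase p) (Finset.erase_ssubset hp)
          (fun q hq => hS q (Finset.mem_of_mem_erase hq)))

end Forward

section Component

def pick3 {α : Type} (x y z : α) : ℕ → α := fun s =>
  if s = 0 then x else if s = 1 then y else z

def fmap (a b : ℕ) : ℕ → ℕ := fun x => if x = a then 0 else if x = b then 1 else 2

def code : ℕ → ℕ → ℕ := fun s r =>
  if s = 0 ∧ r = 1 then 0 else if s = 1 ∧ r = 0 then 1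
  else if s = 1 ∧ r = 2 then 2 else if s = 2 ∧ r = 1 then 3
  else if s = 0 ∧ r = 2 then 4 else 5

lemma code_lt (s r : ℕ) : code s r < 6 := by
  unfold code; split_ifs <;> omega

lemma code_inj {s r s' r' : ℕ} (hs : s < 3) (hr : r < 3) (hs' : s' < 3) (hr' : r' < 3)
    (h1 : s ≠ r) (h2 : s' ≠ r') (h : code s r = code s' r') : s = s' ∧ r = r' := by
  interval_cases s <;> interval_cases r <;> interval_cases s' <;> interval_cases r' <;>
    simp_all [code]

lemma code_surj (y : ℕ) (hy : y < 6) : ∃ s r, s < 3 ∧ r < 3 ∧ s ≠ r ∧ code s r = y := by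
  interval_cases y
  · exact ⟨0, 1, by norm_num, by norm_num, by norm_num, by simp [code]⟩
  · exact ⟨1, 0, by norm_num, by norm_num, by norm_num, by simp [code]⟩
  · exact ⟨1, 2, by norm_num, by norm_num, by norm_num, by simp [code]⟩
  · exact ⟨2, 1, by norm_num, by norm_num, by norm_num, by simp [code]⟩
  · exact ⟨0, 2, by norm_num, by norm_num, by norm_num, by simp [code]⟩
  · exact ⟨2, 0, by norm_num, by norm_num, by norm_num, by simp [code]⟩

lemma TH_code (k1 k2 k3 s r : ℕ) (hs : s < 3) (hr : r < 3) (hne : s ≠ r) :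
    (TH k1 k2 k3).att (code s r) = [s, r] ∧
    (TH k1 k2 k3).lab (code s r) = Lab.b ∧ code s r ∈ (TH k1 k2 k3).E := by
  have hE : ∀ c : ℕ, c < 6 → c ∈ (TH k1 k2 k3).E := by
    intro c hc; simp only [TH, Finset.mem_range]; omega
  interval_cases s <;> interval_cases r
  · exact absurd rfl hne
  · rw [show code 0 1 = 0 by simp [code]]
    exact ⟨by simp [TH], by simp [TH], hE 0 (by norm_num)⟩
  · rw [show code 0 2 = 4 by simp [code]]
    exact ⟨by simp [TH], by simp [TH], hE 4 (by norm_num)⟩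
  · rw [show code 1 0 = 1 by simp [code]]
    exact ⟨by simp [TH], by simp [TH], hE 1 (by norm_num)⟩
  · exact absurd rfl hne
  · rw [show code 1 2 = 2 by simp [code]]
    exact ⟨by simp [TH], by simp [TH], hE 2 (by norm_num)⟩
  · rw [show code 2 0 = 5 by simp [code]]
    exact ⟨by simp [TH], by simp [TH], hE 5 (by norm_num)⟩
  · rw [show code 2 1 = 3 by simp [code]]
    exact ⟨by simp [TH], by simp [TH], hE 3 (by norm_num)⟩
  · exact absurd rfl hne

lemma TH_block (k1 k2 k3 s y : ℕ) (hs : s < 3)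
    (hy : y < 2 * (if s = 0 then k1 else if s = 1 then k2 else k3)) :
    (TH k1 k2 k3).att (6 + (if s = 0 then 0 else if s = 1 then 2*k1 else 2*k1+2*k2) + y)
      = [s] ∧
    (TH k1 k2 k3).lab (6 + (if s = 0 then 0 else if s = 1 then 2*k1 else 2*k1+2*k2) + y)
      = (if y < (if s = 0 then k1 else if s = 1 then k2 else k3) then Lab.I else Lab.O) ∧
    (6 + (if s = 0 then 0 else if s = 1 then 2*k1 else 2*k1+2*k2) + y) ∈ (TH k1 k2 k3).E := by
  interval_cases s <;> norm_num at hy <;>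
    (refine ⟨?_, ?_, ?_⟩ <;>
      simp only [TH, Finset.mem_range] <;>
      norm_num <;>
      first
        | omega
        | rfl
        | (split_ifs <;> first | rfl | omega | (exfalso; omega)))

def outsF (n : ℕ) (D : Finset (Fin n × Fin n)) (v : Fin n) : Finset ℕ :=
  (Finset.univ.filter (fun w : Fin n => (v, w) ∈ D)).image Fin.val

def kout (n : ℕ) (D : Finset (Fin n × Fin n)) (v : Fin n) : ℕ := (outsF n D v).card

def LD (n : ℕ) (D : Finset (Fin n × Fin n)) (v : Fin n) : List ℕ :=
  Finset.sort (outsF n D v) (· ≤ ·)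

def offD (n : ℕ) (D : Finset (Fin n × Fin n)) (v0 v1 : Fin n) : ℕ → ℕ := fun s =>
  if s = 0 then 0 else if s = 1 then 2 * kout n D v0 else 2 * kout n D v0 + 2 * kout n D v1

def gdef (n : ℕ) (D : Finset (Fin n × Fin n)) (v0 v1 v2 : Fin n) : ℕ → ℕ := fun e =>
  if e < n * n then code (fmap ↑v0 ↑v1 (e / n)) (fmap ↑v0 ↑v1 (e % n))
  else if (e - n * n) % 2 = 0 then
    6 + offD n D v0 v1 (fmap ↑v0 ↑v1 (((e - n * n) / 2) / n))
      + (LD n D (pick3 v0 v1 v2 (fmap ↑v0 ↑v1 (((e - n * n) / 2) / n)))).idxOf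
          (((e - n * n) / 2) % n)
  else
    6 + offD n D v0 v1 (fmap ↑v0 ↑v1 (((e - n * n) / 2) % n))
      + kout n D (pick3 v0 v1 v2 (fmap ↑v0 ↑v1 (((e - n * n) / 2) % n)))
      + (LD n D (pick3 v0 v1 v2 (fmap ↑v0 ↑v1 (((e - n * n) / 2) % n)))).idxOf
          (((e - n * n) / 2) / n)

section GdefLemmas

variable {n : ℕ} {D : Finset (Fin n × Fin n)} {v0 v1 v2 : Fin n}

lemma fmap_pick3 (h01 : (v0 : ℕ) ≠ (v1 : ℕ)) (h02 : (v0 : ℕ) ≠ (v2 : ℕ))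
    (h12 : (v1 : ℕ) ≠ (v2 : ℕ)) (s : ℕ) (hs : s < 3) :
    fmap ↑v0 ↑v1 ↑(pick3 v0 v1 v2 s) = s := by
  interval_cases s <;>
    simp [pick3, fmap, h01, h02, h12, Ne.symm h01, Ne.symm h02, Ne.symm h12]

lemma kout_pick3 (s : ℕ) (hs : s < 3) :
    kout n D (pick3 v0 v1 v2 s) =
      (if s = 0 then kout n D v0 else if s = 1 then kout n D v1 else kout n D v2) := by
  interval_cases s <;> simp [pick3]

lemma gdef_b (h01 : (v0 : ℕ) ≠ (v1 : ℕ)) (h02 : (v0 : ℕ) ≠ (v2 : ℕ)) (h12 : (v1 : ℕ) ≠ (v2 : ℕ)) (s r : ℕ) (hs : s < 3) (hr : r < 3) :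
    gdef n D v0 v1 v2 (enc2 n (pick3 v0 v1 v2 s, pick3 v0 v1 v2 r)) = code s r := by
  have hlt := enc2_lt n (pick3 v0 v1 v2 s, pick3 v0 v1 v2 r)
  unfold gdef
  rw [if_pos hlt]
  rw [show enc2 n (pick3 v0 v1 v2 s, pick3 v0 v1 v2 r) / n = ↑(pick3 v0 v1 v2 s) from
    enc2_div n _]
  rw [show enc2 n (pick3 v0 v1 v2 s, pick3 v0 v1 v2 r) % n = ↑(pick3 v0 v1 v2 r) from
    enc2_mod n _]
  rw [fmap_pick3 h01 h02 h12 s hs, fmap_pick3 h01 h02 h12 r hr]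

lemma gdef_i (h01 : (v0 : ℕ) ≠ (v1 : ℕ)) (h02 : (v0 : ℕ) ≠ (v2 : ℕ)) (h12 : (v1 : ℕ) ≠ (v2 : ℕ)) (s : ℕ) (w : Fin n) (hs : s < 3) :
    gdef n D v0 v1 v2 (n * n + 2 * enc2 n (pick3 v0 v1 v2 s, w)) =
      6 + offD n D v0 v1 s + (LD n D (pick3 v0 v1 v2 s)).idxOf (w : ℕ) := by
  set m := enc2 n (pick3 v0 v1 v2 s, w) with hm
  unfold gdef
  rw [if_neg (by omega)]
  rw [show (n * n + 2 * m - n * n) = 2 * m by omega]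
  rw [if_pos (by omega)]
  rw [show 2 * m / 2 = m by omega]
  rw [hm, enc2_div n _, enc2_mod n _]
  simp [fmap_pick3 h01 h02 h12 s hs]

lemma gdef_o (h01 : (v0 : ℕ) ≠ (v1 : ℕ)) (h02 : (v0 : ℕ) ≠ (v2 : ℕ)) (h12 : (v1 : ℕ) ≠ (v2 : ℕ)) (s : ℕ) (w : Fin n) (hs : s < 3) :
    gdef n D v0 v1 v2 (n * n + 2 * enc2 n (w, pick3 v0 v1 v2 s) + 1) =
      6 + offD n D v0 v1 s + kout n D (pick3 v0 v1 v2 s)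
        + (LD n D (pick3 v0 v1 v2 s)).idxOf (w : ℕ) := by
  set m := enc2 n (w, pick3 v0 v1 v2 s) with hm
  unfold gdef
  rw [if_neg (by omega)]
  rw [show (n * n + 2 * m + 1 - n * n) = 2 * m + 1 by omega]
  rw [if_neg (by omega)]
  rw [show (2 * m + 1) / 2 = m by omega]
  rw [hm, enc2_div n _, enc2_mod n _]
  simp [fmap_pick3 h01 h02 h12 s hs]

end GdefLemmas

section AttSComp

variable {n : ℕ} {S : Finset (Fin n × Fin n)}

lemma attS_b (p : Fin n × Fin n) : attS n S (enc2 n p) = [(p.1 : ℕ), (p.2 : ℕ)] := by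
  have h1 : enc2 n p ∉ iE n S := fun h => by have := iE_spec n h; have := enc2_lt n p; omega
  have h2 : enc2 n p ∉ oE n S := fun h => by have := oE_spec n h; have := enc2_lt n p; omega
  simp only [attS, if_neg h1, if_neg h2, enc2_div, enc2_mod]

lemma labS_b (p : Fin n × Fin n) : labS n S (enc2 n p) = Lab.b := by
  have h1 : enc2 n p ∉ iE n S := fun h => by have := iE_spec n h; have := enc2_lt n p; omega
  have h2 : enc2 n p ∉ oE n S := fun h => by have := oE_spec n h; have := enc2_lt n p; omega
  simp only [labS, if_neg h1, if_neg h2]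

lemma attS_i {p : Fin n × Fin n} (hp : p ∈ S) :
    attS n S (n * n + 2 * enc2 n p) = [(p.1 : ℕ)] := by
  have h1 : n * n + 2 * enc2 n p ∈ iE n S := (mem_iE n).2 ⟨p, hp, rfl⟩
  simp only [attS, if_pos h1]
  rw [show n * n + 2 * enc2 n p - n * n = 2 * enc2 n p by omega,
    show 2 * enc2 n p / 2 = enc2 n p by omega, enc2_div]

lemma labS_i {p : Fin n × Fin n} (hp : p ∈ S) :
    labS n S (n * n + 2 * enc2 n p) = Lab.I := by
  have h1 : n * n + 2 * enc2 n p ∈ iE n S := (mem_iE n).2 ⟨p, hp, rfl⟩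
  simp only [labS, if_pos h1]

lemma attS_o {p : Fin n × Fin n} (hp : p ∈ S) :
    attS n S (n * n + 2 * enc2 n p + 1) = [(p.2 : ℕ)] := by
  have h1 : n * n + 2 * enc2 n p + 1 ∉ iE n S := fun h => by have := iE_spec n h; omega
  have h2 : n * n + 2 * enc2 n p + 1 ∈ oE n S := (mem_oE n).2 ⟨p, hp, rfl⟩
  simp only [attS, if_neg h1, if_pos h2]
  rw [show n * n + 2 * enc2 n p + 1 - n * n = 2 * enc2 n p + 1 by omega,
    show (2 * enc2 n p + 1) / 2 = enc2 n p by omega, enc2_mod]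

lemma labS_o {p : Fin n × Fin n} (hp : p ∈ S) :
    labS n S (n * n + 2 * enc2 n p + 1) = Lab.O := by
  have h1 : n * n + 2 * enc2 n p + 1 ∉ iE n S := fun h => by have := iE_spec n h; omega
  have h2 : n * n + 2 * enc2 n p + 1 ∈ oE n S := (mem_oE n).2 ⟨p, hp, rfl⟩
  simp only [labS, if_neg h1, if_pos h2]

end AttSComp

end Component

section IsoLemma

lemma LD_length (n : ℕ) (D : Finset (Fin n × Fin n)) (v : Fin n) :
    (LD n D v).length = kout n D v := Finset.length_sort _

lemma LD_nodup (n : ℕ) (D : Finset (Fin n × Fin n)) (v : Fin n) :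
    (LD n D v).Nodup := Finset.sort_nodup _ _

lemma LD_mem {n : ℕ} {D : Finset (Fin n × Fin n)} {v w : Fin n} (h : (v, w) ∈ D) :
    (w : ℕ) ∈ LD n D v := by
  rw [LD, Finset.mem_sort]
  exact Finset.mem_image.2 ⟨w, Finset.mem_filter.2 ⟨Finset.mem_univ _, h⟩, rfl⟩

lemma LD_back {n : ℕ} {D : Finset (Fin n × Fin n)} {v : Fin n} {x : ℕ}
    (h : x ∈ LD n D v) : ∃ w : Fin n, (v, w) ∈ D ∧ (w : ℕ) = x := by
  rw [LD, Finset.mem_sort] at h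
  obtain ⟨w, hw, rfl⟩ := Finset.mem_image.1 h
  exact ⟨w, (Finset.mem_filter.1 hw).2, rfl⟩

lemma LD_idx_lt {n : ℕ} {D : Finset (Fin n × Fin n)} {v w : Fin n} (h : (v, w) ∈ D) :
    (LD n D v).idxOf (w : ℕ) < kout n D v := by
  rw [← LD_length n D v]
  exact List.idxOf_lt_length_iff.2 (LD_mem h)

lemma LD_idx_inj {n : ℕ} {D : Finset (Fin n × Fin n)} {v : Fin n} {x y : ℕ}
    (hx : x ∈ LD n D v) (hy : y ∈ LD n D v)
    (h : (LD n D v).idxOf x = (LD n D v).idxOf y) : x = y := by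
  have h1 := List.idxOf_get (List.idxOf_lt_length_iff.2 hx)
  have h2 := List.idxOf_get (List.idxOf_lt_length_iff.2 hy)
  rw [← h1, ← h2]
  exact congrArg _ (Fin.ext h)

lemma component_iso (n : ℕ) (D : Finset (Fin n × Fin n)) (v0 v1 v2 : Fin n)
    (Vf Ef : Finset ℕ)
    (h01 : v0 ≠ v1) (h02 : v0 ≠ v2) (h12 : v1 ≠ v2)
    (hDsymm : ∀ x y : Fin n, (x, y) ∈ D → (y, x) ∈ D)
    (hVf : Vf = {(v0 : ℕ), (v1 : ℕ), (v2 : ℕ)})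
    (hEf : ∀ e, e ∈ Ef ↔
      (∃ s r, s < 3 ∧ r < 3 ∧ s ≠ r ∧ e = enc2 n (pick3 v0 v1 v2 s, pick3 v0 v1 v2 r)) ∨
      (∃ s, ∃ w : Fin n, s < 3 ∧ (pick3 v0 v1 v2 s, w) ∈ D ∧
        e = n * n + 2 * enc2 n (pick3 v0 v1 v2 s, w)) ∨
      (∃ s, ∃ w : Fin n, s < 3 ∧ (w, pick3 v0 v1 v2 s) ∈ D ∧
        e = n * n + 2 * enc2 n (w, pick3 v0 v1 v2 s) + 1)) :
    BHypergraph.Isomorphic ⟨Vf, Ef, attS n D, labS n D⟩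
      (TH (kout n D v0) (kout n D v1) (kout n D v2)) := by
  have hv01 : (v0 : ℕ) ≠ ↑v1 := fun h => h01 (Fin.ext h)
  have hv02 : (v0 : ℕ) ≠ ↑v2 := fun h => h02 (Fin.ext h)
  have hv12 : (v1 : ℕ) ≠ ↑v2 := fun h => h12 (Fin.ext h)
  have fp := fmap_pick3 (v2 := v2) hv01 hv02 hv12
  have gb := gdef_b (D := D) (v2 := v2) hv01 hv02 hv12
  have gi := gdef_i (D := D) hv01 hv02 hv12
  have go := gdef_o (D := D) hv01 hv02 hv12
  have hf0 : fmap ↑v0 ↑v1 ↑v0 = 0 := if_pos rfl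
  have hf1 : fmap ↑v0 ↑v1 ↑v1 = 1 := by simp [fmap, Ne.symm hv01]
  have hf2 : fmap ↑v0 ↑v1 ↑v2 = 2 := by simp [fmap, Ne.symm hv02, Ne.symm hv12]
  have hTHE : ∀ x, x ∈ (TH (kout n D v0) (kout n D v1) (kout n D v2)).E ↔
      x < 6 + 2 * kout n D v0 + 2 * kout n D v1 + 2 * kout n D v2 := by
    intro x
    simp only [TH, Finset.mem_range]
  have hband : ∀ s, s < 3 → offD n D v0 v1 s + 2 * kout n D (pick3 v0 v1 v2 s)
      ≤ 2 * kout n D v0 + 2 * kout n D v1 + 2 * kout n D v2 := by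
    intro s hs
    interval_cases s <;> simp [offD, pick3] <;> omega
  have hoffeq : ∀ s, (if s = 0 then 0 else if s = 1 then 2 * kout n D v0
      else 2 * kout n D v0 + 2 * kout n D v1) = offD n D v0 v1 s := fun s => rfl
  refine ⟨fmap ↑v0 ↑v1, gdef n D v0 v1 v2, ⟨?_, ?_, ?_⟩, ⟨?_, ?_, ?_⟩, ?_⟩
  · -- f MapsTo
    intro x hx
    rw [show (⟨Vf, Ef, attS n D, labS n D⟩ : BHypergraph Lab).V = Vf from rfl, hVf] at hx
    simp only [Finset.coe_insert, Set.mem_insert_iff, Finset.coe_singleton,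
      Set.mem_singleton_iff] at hx
    rcases hx with rfl | rfl | rfl <;>
      simp [hf0, hf1, hf2, TH]
  · -- f InjOn
    intro x hx y hy hxy
    rw [show (⟨Vf, Ef, attS n D, labS n D⟩ : BHypergraph Lab).V = Vf from rfl, hVf] at hx hy
    simp only [Finset.coe_insert, Set.mem_insert_iff, Finset.coe_singleton,
      Set.mem_singleton_iff] at hx hy
    rcases hx with rfl | rfl | rfl <;> rcases hy with rfl | rfl | rfl <;>
      simp_all [hf0, hf1, hf2]
  · -- f SurjOn
    intro y hy
    simp only [TH, Finset.coe_insert, Set.mem_insert_iff, Finset.coe_singleton,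
      Set.mem_singleton_iff] at hy
    have hy' : y = 0 ∨ y = 1 ∨ y = 2 := by simpa using hy
    rcases hy' with rfl | rfl | rfl
    · exact ⟨↑v0, by rw [show (⟨Vf, Ef, attS n D, labS n D⟩ : BHypergraph Lab).V = Vf
        from rfl, hVf]; simp, hf0⟩
    · exact ⟨↑v1, by rw [show (⟨Vf, Ef, attS n D, labS n D⟩ : BHypergraph Lab).V = Vf
        from rfl, hVf]; simp, hf1⟩
    · exact ⟨↑v2, by rw [show (⟨Vf, Ef, attS n D, labS n D⟩ : BHypergraph Lab).V = Vf
        from rfl, hVf]; simp, hf2⟩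
  · -- g MapsTo
    intro e he
    have he1 : e ∈ Ef := Finset.mem_coe.1 he
    rcases (hEf e).1 he1 with ⟨s, r, hs, hr, hsr, rfl⟩ | ⟨s, w, hs, hw, rfl⟩ |
      ⟨s, w, hs, hw, rfl⟩
    · rw [Finset.mem_coe, hTHE, gb s r hs hr]
      have := code_lt s r
      omega
    · rw [Finset.mem_coe, hTHE, gi s w hs]
      have hidx := LD_idx_lt hw
      have := hband s hs
      omega
    · rw [Finset.mem_coe, hTHE, go s w hs]
      have hidx := LD_idx_lt (hDsymm _ _ hw)
      have := hband s hs
      omega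
  · -- g InjOn
    intro e he e' he' hg
    have he1 : e ∈ Ef := Finset.mem_coe.1 he
    have he2 : e' ∈ Ef := Finset.mem_coe.1 he'
    rcases (hEf e).1 he1 with ⟨s, r, hs, hr, hsr, rfl⟩ | ⟨s, w, hs, hw, rfl⟩ |
        ⟨s, w, hs, hw, rfl⟩ <;>
      rcases (hEf e').1 he2 with ⟨s', r', hs', hr', hsr', rfl⟩ | ⟨s', w', hs', hw', rfl⟩ |
        ⟨s', w', hs', hw', rfl⟩
    · rw [gb s r hs hr, gb s' r' hs' hr'] at hg
      obtain ⟨rfl, rfl⟩ := code_inj hs hr hs' hr' hsr hsr' hg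
      rfl
    · exfalso
      rw [gb s r hs hr, gi s' w' hs'] at hg
      have := code_lt s r
      omega
    · exfalso
      rw [gb s r hs hr, go s' w' hs'] at hg
      have := code_lt s r
      omega
    · exfalso
      rw [gi s w hs, gb s' r' hs' hr'] at hg
      have := code_lt s' r'
      omega
    · -- I/I
      rw [gi s w hs, gi s' w' hs'] at hg
      have hi1 := LD_idx_lt hw
      have hi2 := LD_idx_lt hw'
      have hseq : s = s' := by
        by_contra hne
        interval_cases s <;> interval_cases s' <;>
          (try norm_num [offD, pick3] at hg hi1 hi2) <;> omega
      subst hseq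
      have hieq : (LD n D (pick3 v0 v1 v2 s)).idxOf (w : ℕ) =
          (LD n D (pick3 v0 v1 v2 s)).idxOf (w' : ℕ) := by omega
      have hww : (w : ℕ) = (w' : ℕ) := LD_idx_inj (LD_mem hw) (LD_mem hw') hieq
      rw [Fin.ext hww]
    · -- I/O
      exfalso
      rw [gi s w hs, go s' w' hs'] at hg
      have hi1 := LD_idx_lt hw
      have hi2 := LD_idx_lt (hDsymm _ _ hw')
      interval_cases s <;> interval_cases s' <;>
        (try norm_num [offD, pick3] at hg hi1 hi2) <;> omega
    · -- O/b
      exfalso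
      rw [go s w hs, gb s' r' hs' hr'] at hg
      have := code_lt s' r'
      omega
    · -- O/I
      exfalso
      rw [go s w hs, gi s' w' hs'] at hg
      have hi1 := LD_idx_lt (hDsymm _ _ hw)
      have hi2 := LD_idx_lt hw'
      interval_cases s <;> interval_cases s' <;>
        (try norm_num [offD, pick3] at hg hi1 hi2) <;> omega
    · -- O/O
      rw [go s w hs, go s' w' hs'] at hg
      have hi1 := LD_idx_lt (hDsymm _ _ hw)
      have hi2 := LD_idx_lt (hDsymm _ _ hw')
      have hseq : s = s' := by
        by_contra hne
        interval_cases s <;> interval_cases s' <;>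
          (try norm_num [offD, pick3] at hg hi1 hi2) <;> omega
      subst hseq
      have hieq : (LD n D (pick3 v0 v1 v2 s)).idxOf (w : ℕ) =
          (LD n D (pick3 v0 v1 v2 s)).idxOf (w' : ℕ) := by omega
      have hww : (w : ℕ) = (w' : ℕ) :=
        LD_idx_inj (LD_mem (hDsymm _ _ hw)) (LD_mem (hDsymm _ _ hw')) hieq
      rw [Fin.ext hww]
  · -- g SurjOn
    intro y hy
    have hy' : y < 6 + 2 * kout n D v0 + 2 * kout n D v1 + 2 * kout n D v2 :=
      (hTHE y).1 (Finset.mem_coe.1 hy)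
    by_cases hy6 : y < 6
    · obtain ⟨s, r, hs, hr, hsr, hc⟩ := code_surj y hy6
      refine ⟨enc2 n (pick3 v0 v1 v2 s, pick3 v0 v1 v2 r),
        Finset.mem_coe.2 ((hEf _).2 (Or.inl ⟨s, r, hs, hr, hsr, rfl⟩)), ?_⟩
      rw [gb s r hs hr, hc]
    · have hcase : ∃ s, s < 3 ∧ 6 + offD n D v0 v1 s ≤ y ∧
          y < 6 + offD n D v0 v1 s + 2 * kout n D (pick3 v0 v1 v2 s) := by
        by_cases hA : y < 6 + 2 * kout n D v0
        · refine ⟨0, by norm_num, ?_, ?_⟩ <;> simp [offD, pick3] <;> omega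
        · by_cases hB : y < 6 + 2 * kout n D v0 + 2 * kout n D v1
          · refine ⟨1, by norm_num, ?_, ?_⟩ <;> simp [offD, pick3] <;> omega
          · refine ⟨2, by norm_num, ?_, ?_⟩ <;> simp [offD, pick3] <;> omega
      obtain ⟨s, hs, hge, hlt⟩ := hcase
      by_cases hIO : y - 6 - offD n D v0 v1 s < kout n D (pick3 v0 v1 v2 s)
      · have hjlen : y - 6 - offD n D v0 v1 s < (LD n D (pick3 v0 v1 v2 s)).length := by
          rw [LD_length]; exact hIO
        have hxmem : (LD n D (pick3 v0 v1 v2 s)).get ⟨y - 6 - offD n D v0 v1 s, hjlen⟩ ∈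
            LD n D (pick3 v0 v1 v2 s) := List.get_mem _ _
        obtain ⟨w, hwD, hwx⟩ := LD_back hxmem
        refine ⟨n * n + 2 * enc2 n (pick3 v0 v1 v2 s, w),
          Finset.mem_coe.2 ((hEf _).2 (Or.inr (Or.inl ⟨s, w, hs, hwD, rfl⟩))), ?_⟩
        rw [gi s w hs, hwx, List.get_idxOf (LD_nodup n D _)]
        show 6 + offD n D v0 v1 s + (y - 6 - offD n D v0 v1 s) = y
        omega
      · have hjlen : y - 6 - offD n D v0 v1 s - kout n D (pick3 v0 v1 v2 s) <
            (LD n D (pick3 v0 v1 v2 s)).length := by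
          rw [LD_length]; omega
        have hxmem : (LD n D (pick3 v0 v1 v2 s)).get
            ⟨y - 6 - offD n D v0 v1 s - kout n D (pick3 v0 v1 v2 s), hjlen⟩ ∈
            LD n D (pick3 v0 v1 v2 s) := List.get_mem _ _
        obtain ⟨w, hwD, hwx⟩ := LD_back hxmem
        refine ⟨n * n + 2 * enc2 n (w, pick3 v0 v1 v2 s) + 1,
          Finset.mem_coe.2 ((hEf _).2 (Or.inr (Or.inr ⟨s, w, hs, hDsymm _ _ hwD, rfl⟩))), ?_⟩
        rw [go s w hs, hwx, List.get_idxOf (LD_nodup n D _)]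
        show 6 + offD n D v0 v1 s + kout n D (pick3 v0 v1 v2 s) +
          (y - 6 - offD n D v0 v1 s - kout n D (pick3 v0 v1 v2 s)) = y
        omega
  · -- attachments and labels agree
    intro e he
    have he1 : e ∈ Ef := he
    rcases (hEf e).1 he1 with ⟨s, r, hs, hr, hsr, rfl⟩ | ⟨s, w, hs, hw, rfl⟩ |
      ⟨s, w, hs, hw, rfl⟩
    · obtain ⟨ha, hl, _⟩ :=
        TH_code (kout n D v0) (kout n D v1) (kout n D v2) s r hs hr hsr
      constructor
      · rw [gb s r hs hr, ha]
        show _ = (attS n D _).map _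
        rw [attS_b]
        simp [fp s hs, fp r hr]
      · rw [gb s r hs hr, hl]
        show _ = labS n D _
        rw [labS_b]
    · have hidx := LD_idx_lt hw
      have hy2 : (LD n D (pick3 v0 v1 v2 s)).idxOf (w : ℕ) <
          2 * (if s = 0 then kout n D v0 else if s = 1 then kout n D v1
            else kout n D v2) := by
        rw [← kout_pick3 s hs]; omega
      have hb := TH_block (kout n D v0) (kout n D v1) (kout n D v2) s
        ((LD n D (pick3 v0 v1 v2 s)).idxOf (w : ℕ)) hs hy2
      rw [hoffeq s] at hb
      constructor
      · rw [gi s w hs, hb.1]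
        show _ = (attS n D _).map _
        rw [attS_i hw]
        simp [fp s hs]
      · rw [gi s w hs, hb.2.1]
        show _ = labS n D _
        rw [labS_i hw, if_pos]
        rw [← kout_pick3 s hs]; exact hidx
    · have hw' : (pick3 v0 v1 v2 s, w) ∈ D := hDsymm _ _ hw
      have hidx := LD_idx_lt hw'
      have hy2 : kout n D (pick3 v0 v1 v2 s) + (LD n D (pick3 v0 v1 v2 s)).idxOf (w : ℕ) <
          2 * (if s = 0 then kout n D v0 else if s = 1 then kout n D v1
            else kout n D v2) := by
        rw [← kout_pick3 s hs]; omega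
      have hb := TH_block (kout n D v0) (kout n D v1) (kout n D v2) s
        (kout n D (pick3 v0 v1 v2 s) + (LD n D (pick3 v0 v1 v2 s)).idxOf (w : ℕ)) hs hy2
      rw [hoffeq s] at hb
      have harg : 6 + offD n D v0 v1 s + kout n D (pick3 v0 v1 v2 s) +
          (LD n D (pick3 v0 v1 v2 s)).idxOf (w : ℕ) =
          6 + offD n D v0 v1 s + (kout n D (pick3 v0 v1 v2 s) +
            (LD n D (pick3 v0 v1 v2 s)).idxOf (w : ℕ)) := by omega
      constructor
      · rw [go s w hs, harg, hb.1]
        show _ = (attS n D _).map _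
        rw [attS_o hw]
        simp [fp s hs]
      · rw [go s w hs, harg, hb.2.1]
        show _ = labS n D _
        rw [labS_o hw, if_neg]
        rw [← kout_pick3 s hs]; omega

end IsoLemma

section Union

lemma sort3 {α : Type} [DecidableEq α] (f : α → ℕ) (a b c : α)
    (hab : a ≠ b) (hac : a ≠ c) (hbc : b ≠ c) :
    ∃ w0 w1 w2 : α, w0 ≠ w1 ∧ w0 ≠ w2 ∧ w1 ≠ w2 ∧
      ({w0, w1, w2} : Finset α) = {a, b, c} ∧ f w0 ≤ f w1 ∧ f w1 ≤ f w2 := by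
  rcases le_total (f a) (f b) with h1 | h1 <;> rcases le_total (f b) (f c) with h2 | h2 <;>
    rcases le_total (f a) (f c) with h3 | h3
  · exact ⟨a, b, c, hab, hac, hbc, rfl, h1, h2⟩
  · exact ⟨a, b, c, hab, hac, hbc, rfl, h1, h2⟩
  · exact ⟨a, c, b, hac, hab, hbc.symm, by ext x; simp; tauto, h3, h2⟩
  · exact ⟨c, a, b, hac.symm, hbc.symm, hab, by ext x; simp; tauto, h3, h1⟩
  · exact ⟨b, a, c, hab.symm, hbc, hac, by ext x; simp; tauto, h1, h3⟩
  · exact ⟨b, c, a, hbc, hab.symm, hac.symm, by ext x; simp; tauto, h2, h3⟩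
  · exact ⟨a, c, b, hac, hab, hbc.symm, by ext x; simp; tauto, h3, h2⟩
  · exact ⟨c, b, a, hbc.symm, hac.symm, hab.symm, by ext x; simp; tauto, h2, h1⟩

lemma pick3_ne {α : Type} {x y z : α} (hxy : x ≠ y) (hxz : x ≠ z) (hyz : y ≠ z)
    {s r : ℕ} (hs : s < 3) (hr : r < 3) (hsr : s ≠ r) :
    pick3 x y z s ≠ pick3 x y z r := by
  interval_cases s <;> interval_cases r
  · exact absurd rfl hsr
  · simpa [pick3] using hxy
  · simpa [pick3] using hxz
  · simpa [pick3] using Ne.symm hxy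
  · exact absurd rfl hsr
  · simpa [pick3] using hyz
  · simpa [pick3] using Ne.symm hxz
  · simpa [pick3] using Ne.symm hyz
  · exact absurd rfl hsr

noncomputable def cVdef (n : ℕ) (Tf : Fin n → Finset (Fin n)) (P : Finset (Finset (Fin n))) : ℕ → ℕ :=
  fun v => if h : v < n then P.toList.idxOf (Tf ⟨v, h⟩) else 0

def ownerdef (n : ℕ) : ℕ → ℕ := fun e =>
  if e < n * n then e / n
  else if (e - n * n) % 2 = 0 then ((e - n * n) / 2) / n else ((e - n * n) / 2) % n

lemma owner_b (n : ℕ) (p : Fin n × Fin n) : ownerdef n (enc2 n p) = (p.1 : ℕ) := by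
  have := enc2_lt n p
  simp only [ownerdef, if_pos this, enc2_div]

lemma owner_i (n : ℕ) (p : Fin n × Fin n) :
    ownerdef n (n * n + 2 * enc2 n p) = (p.1 : ℕ) := by
  simp only [ownerdef]
  rw [if_neg (by omega), show n * n + 2 * enc2 n p - n * n = 2 * enc2 n p by omega,
    if_pos (by omega), show 2 * enc2 n p / 2 = enc2 n p by omega, enc2_div]

lemma owner_o (n : ℕ) (p : Fin n × Fin n) :
    ownerdef n (n * n + 2 * enc2 n p + 1) = (p.2 : ℕ) := by
  simp only [ownerdef]
  rw [if_neg (by omega), show n * n + 2 * enc2 n p + 1 - n * n = 2 * enc2 n p + 1 by omega,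
    if_neg (by omega), show (2 * enc2 n p + 1) / 2 = enc2 n p by omega, enc2_mod]

lemma forward_union (n : ℕ) (adj : Fin n → Fin n → Bool)
    (hsymm : ∀ u v, adj u v = adj v u) (hirr : ∀ v, adj v v = false)
    (hdeg : ∀ v, (Finset.univ.filter (fun u => adj v u = true)).card ≤ 5)
    (Tf : Fin n → Finset (Fin n)) (P : Finset (Finset (Fin n)))
    (hTmem : ∀ v, Tf v ∈ P ∧ v ∈ Tf v)
    (hTuni : ∀ (v : Fin n) (t : Finset (Fin n)), t ∈ P → v ∈ t → t = Tf v)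
    (hP3 : ∀ t ∈ P, t.card = 3 ∧ ∀ u ∈ t, ∀ v ∈ t, u ≠ v → adj u v = true) :
    IsUnionOfCopies TBG.ZSet
      (HS n adj (Finset.univ.filter
        (fun p : Fin n × Fin n => adj p.1 p.2 = true ∧ Tf p.1 ≠ Tf p.2))) := by
  set D := Finset.univ.filter
    (fun p : Fin n × Fin n => adj p.1 p.2 = true ∧ Tf p.1 ≠ Tf p.2) with hDdef
  have hmemD : ∀ p : Fin n × Fin n, p ∈ D ↔ adj p.1 p.2 = true ∧ Tf p.1 ≠ Tf p.2 := by
    intro p; rw [hDdef]; simp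
  have hDsymm : ∀ x y : Fin n, (x, y) ∈ D → (y, x) ∈ D := by
    intro x y h
    rw [hmemD] at h ⊢
    exact ⟨by rw [hsymm]; exact h.1, Ne.symm h.2⟩
  have hcV : ∀ x : Fin n, cVdef n Tf P (x : ℕ) = P.toList.idxOf (Tf x) :=
    fun x => dif_pos x.isLt
  have hcVlt : ∀ x : Fin n, cVdef n Tf P (x : ℕ) < P.card := by
    intro x
    rw [hcV, ← Finset.length_toList]
    exact List.idxOf_lt_length_iff.2 (Finset.mem_toList.2 (hTmem x).1)
  have hcVcongr : ∀ x y : Fin n, Tf x = Tf y → cVdef n Tf P ↑x = cVdef n Tf P ↑y := by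
    intro x y h; rw [hcV, hcV, h]
  -- the three kinds of edges of HS D
  have hEcases : ∀ e ∈ (HS n adj D).E,
      (∃ p : Fin n × Fin n, adj p.1 p.2 = true ∧ Tf p.1 = Tf p.2 ∧ e = enc2 n p) ∨
      (∃ p : Fin n × Fin n, p ∈ D ∧ e = n * n + 2 * enc2 n p) ∨
      (∃ p : Fin n × Fin n, p ∈ D ∧ e = n * n + 2 * enc2 n p + 1) := by
    intro e he
    rcases Finset.mem_union.1 he with he' | ho
    · rcases Finset.mem_union.1 he' with hb | hi
      · obtain ⟨p, h1, h2, h3⟩ := (mem_bE n adj).1 hb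
        rw [hmemD] at h2
        push_neg at h2
        exact Or.inl ⟨p, h1, h2 h1, h3.symm⟩
      · obtain ⟨p, h1, h2⟩ := (mem_iE n).1 hi
        exact Or.inr (Or.inl ⟨p, h1, h2.symm⟩)
    · obtain ⟨p, h1, h2⟩ := (mem_oE n).1 ho
      exact Or.inr (Or.inr ⟨p, h1, h2.symm⟩)
  refine ⟨P.card, cVdef n Tf P, fun e => cVdef n Tf P (ownerdef n e), ?_, ?_, ?_, ?_, ?_⟩
  · intro v hv
    rw [show (HS n adj D).V = Finset.range n from rfl, Finset.mem_range] at hv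
    exact hcVlt ⟨v, hv⟩
  · intro e he
    dsimp only
    rcases hEcases e he with ⟨p, _, _, rfl⟩ | ⟨p, _, rfl⟩ | ⟨p, _, rfl⟩
    · rw [owner_b]; exact hcVlt p.1
    · rw [owner_i]; exact hcVlt p.1
    · rw [owner_o]; exact hcVlt p.2
  · intro e he v hv
    rw [show (HS n adj D).V = Finset.range n from rfl, Finset.mem_range]
    rcases hEcases e he with ⟨p, _, _, rfl⟩ | ⟨p, hp, rfl⟩ | ⟨p, hp, rfl⟩
    · rw [show (HS n adj D).att = attS n D from rfl, attS_b] at hv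
      simp only [List.mem_cons, List.not_mem_nil, or_false] at hv
      rcases hv with rfl | rfl
      · exact p.1.isLt
      · exact p.2.isLt
    · rw [show (HS n adj D).att = attS n D from rfl, attS_i hp] at hv
      simp only [List.mem_cons, List.not_mem_nil, or_false] at hv
      rw [hv]; exact p.1.isLt
    · rw [show (HS n adj D).att = attS n D from rfl, attS_o hp] at hv
      simp only [List.mem_cons, List.not_mem_nil, or_false] at hv
      rw [hv]; exact p.2.isLt
  · intro e he v hv
    dsimp only
    rcases hEcases e he with ⟨p, hadj, hTT, rfl⟩ | ⟨p, hp, rfl⟩ | ⟨p, hp, rfl⟩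
    · rw [show (HS n adj D).att = attS n D from rfl, attS_b] at hv
      simp only [List.mem_cons, List.not_mem_nil, or_false] at hv
      rw [owner_b]
      rcases hv with rfl | rfl
      · rfl
      · exact hcVcongr p.2 p.1 hTT.symm
    · rw [show (HS n adj D).att = attS n D from rfl, attS_i hp] at hv
      simp only [List.mem_cons, List.not_mem_nil, or_false] at hv
      rw [hv, owner_i]
    · rw [show (HS n adj D).att = attS n D from rfl, attS_o hp] at hv
      simp only [List.mem_cons, List.not_mem_nil, or_false] at hv
      rw [hv, owner_o]
  · -- components
    intro i hi
    have hlen : i < P.toList.length := by rw [Finset.length_toList]; exact hi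
    set t := P.toList.get ⟨i, hlen⟩ with ht
    have htP : t ∈ P := Finset.mem_toList.1 (List.get_mem _ _)
    have hcVx : ∀ x : Fin n, cVdef n Tf P (x : ℕ) = i ↔ x ∈ t := by
      intro x
      rw [hcV]
      constructor
      · intro h
        have hxlt : P.toList.idxOf (Tf x) < P.toList.length := by
          rw [Finset.length_toList, h]; exact hi
        have hTfx : Tf x = t := by
          rw [← List.idxOf_get hxlt]
          exact congrArg _ (Fin.ext h)
        rw [← hTfx]
        exact (hTmem x).2
      · intro hx
        have := hTuni x t htP hx
        rw [← this, ht]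
        exact List.get_idxOf (Finset.nodup_toList P) _
    obtain ⟨hc3, hadjt⟩ := hP3 t htP
    obtain ⟨a, b, c, hab, hac, hbc, htabc⟩ := Finset.card_eq_three.1 hc3
    obtain ⟨w0, w1, w2, h01, h02, h12, hw, hk01, hk12⟩ :=
      sort3 (kout n D) a b c hab hac hbc
    have htw : t = {w0, w1, w2} := by rw [htabc, ← hw]
    -- degree bound
    have hkle : ∀ v : Fin n, kout n D v ≤ 3 := by
      intro v
      have hkcard : kout n D v =
          (Finset.univ.filter (fun w : Fin n => (v, w) ∈ D)).card := by
        rw [kout, outsF]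
        exact Finset.card_image_of_injective _ Fin.val_injective
      set outs := Finset.univ.filter (fun w : Fin n => (v, w) ∈ D) with houts
      set mates := (Tf v).erase v with hmates
      have hsub : outs ∪ mates ⊆ Finset.univ.filter (fun u => adj v u = true) := by
        intro u hu
        rcases Finset.mem_union.1 hu with h | h
        · rw [houts, Finset.mem_filter] at h
          rw [Finset.mem_filter]
          exact ⟨Finset.mem_univ _, ((hmemD _).1 h.2).1⟩
        · rw [hmates, Finset.mem_erase] at h
          rw [Finset.mem_filter]
          refine ⟨Finset.mem_univ _, ?_⟩
          exact (hP3 (Tf v) (hTmem v).1).2 v (hTmem v).2 u h.2 (Ne.symm h.1)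
      have hdisj : Disjoint outs mates := by
        rw [Finset.disjoint_left]
        intro u hu hu'
        rw [houts, Finset.mem_filter] at hu
        rw [hmates, Finset.mem_erase] at hu'
        have : Tf u = Tf v := (hTuni u (Tf v) (hTmem v).1 hu'.2).symm
        exact ((hmemD _).1 hu.2).2 this.symm
      have hmc : mates.card = 2 := by
        rw [hmates, Finset.card_erase_of_mem (hTmem v).2, (hP3 (Tf v) (hTmem v).1).1]
      have hcu := Finset.card_union_of_disjoint hdisj
      have hle := Finset.card_le_card hsub
      have h5 := hdeg v
      omega
    -- membership of the w's in t
    have hw0t : w0 ∈ t := by rw [htw]; simp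
    have hw1t : w1 ∈ t := by rw [htw]; simp
    have hw2t : w2 ∈ t := by rw [htw]; simp
    have hvtx_t : ∀ s, s < 3 → pick3 w0 w1 w2 s ∈ t := by
      intro s hs; interval_cases s <;> simp [pick3, hw0t, hw1t, hw2t]
    have hback : ∀ x : Fin n, x ∈ t → ∃ s, s < 3 ∧ pick3 w0 w1 w2 s = x := by
      intro x hx
      rw [htw] at hx
      simp only [Finset.mem_insert, Finset.mem_singleton] at hx
      rcases hx with rfl | rfl | rfl
      · exact ⟨0, by norm_num, rfl⟩
      · exact ⟨1, by norm_num, rfl⟩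
      · exact ⟨2, by norm_num, rfl⟩
    have hTft : ∀ x : Fin n, x ∈ t → Tf x = t := fun x hx => (hTuni x t htP hx).symm
    -- choose the start hypergraph index
    have hb0 := hkle w0
    have hb1 := hkle w1
    have hb2 := hkle w2
    have hk64 : kout n D w0 + 4 * kout n D w1 + 16 * kout n D w2 < 64 := by omega
    refine ⟨TBG.Z ⟨kout n D w0 + 4 * kout n D w1 + 16 * kout n D w2, hk64⟩,
      ⟨_, rfl⟩, ?_⟩
    have hZ : TBG.Z ⟨kout n D w0 + 4 * kout n D w1 + 16 * kout n D w2, hk64⟩ =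
        TH (kout n D w0) (kout n D w1) (kout n D w2) := by
      show TH _ _ _ = _
      rw [show (kout n D w0 + 4 * kout n D w1 + 16 * kout n D w2) % 4 = kout n D w0 by
            omega,
          show (kout n D w0 + 4 * kout n D w1 + 16 * kout n D w2) / 4 % 4 = kout n D w1 by
            omega,
          show (kout n D w0 + 4 * kout n D w1 + 16 * kout n D w2) / 16 = kout n D w2 by
            omega]
      rw [show min (kout n D w0) (min (kout n D w1) (kout n D w2)) = kout n D w0 by omega,
          show max (kout n D w0) (max (kout n D w1) (kout n D w2)) = kout n D w2 by omega,
          show kout n D w0 + kout n D w1 + kout n D w2 - kout n D w0 - kout n D w2 =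
            kout n D w1 by omega]
    rw [hZ]
    -- characterize the component's vertex and edge sets
    have hVfeq : (HS n adj D).V.filter (fun v => cVdef n Tf P v = i) =
        {(w0 : ℕ), (w1 : ℕ), (w2 : ℕ)} := by
      ext x
      simp only [Finset.mem_filter, show (HS n adj D).V = Finset.range n from rfl,
        Finset.mem_range, Finset.mem_insert, Finset.mem_singleton]
      constructor
      · rintro ⟨hx, hcx⟩
        have : (⟨x, hx⟩ : Fin n) ∈ t := (hcVx ⟨x, hx⟩).1 hcx
        obtain ⟨s, hs, hvs⟩ := hback _ this
        have hx2 : x = ((pick3 w0 w1 w2 s : Fin n) : ℕ) := by rw [hvs]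
        interval_cases s
        · left; simpa [pick3] using hx2
        · right; left; simpa [pick3] using hx2
        · right; right; simpa [pick3] using hx2
      · intro hx
        rcases hx with rfl | rfl | rfl
        · exact ⟨w0.isLt, (hcVx w0).2 hw0t⟩
        · exact ⟨w1.isLt, (hcVx w1).2 hw1t⟩
        · exact ⟨w2.isLt, (hcVx w2).2 hw2t⟩
    have hEfeq : ∀ e, e ∈ (HS n adj D).E.filter
        (fun e => cVdef n Tf P (ownerdef n e) = i) ↔
        (∃ s r, s < 3 ∧ r < 3 ∧ s ≠ r ∧
          e = enc2 n (pick3 w0 w1 w2 s, pick3 w0 w1 w2 r)) ∨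
        (∃ s, ∃ w : Fin n, s < 3 ∧ (pick3 w0 w1 w2 s, w) ∈ D ∧
          e = n * n + 2 * enc2 n (pick3 w0 w1 w2 s, w)) ∨
        (∃ s, ∃ w : Fin n, s < 3 ∧ (w, pick3 w0 w1 w2 s) ∈ D ∧
          e = n * n + 2 * enc2 n (w, pick3 w0 w1 w2 s) + 1) := by
      intro e
      constructor
      · intro he
        rw [Finset.mem_filter] at he
        obtain ⟨heE, hei⟩ := he
        rcases hEcases e heE with ⟨p, hadj, hTT, rfl⟩ | ⟨p, hp, rfl⟩ | ⟨p, hp, rfl⟩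
        · rw [owner_b] at hei
          have hp1t : p.1 ∈ t := (hcVx p.1).1 hei
          have hp2t : p.2 ∈ t := by
            have : Tf p.2 = t := by rw [← hTT]; exact hTft p.1 hp1t
            rw [← this]; exact (hTmem p.2).2
          obtain ⟨s, hs, hvs⟩ := hback p.1 hp1t
          obtain ⟨r, hr, hvr⟩ := hback p.2 hp2t
          have hp12 : p.1 ≠ p.2 := by
            intro hq
            rw [hq, hirr] at hadj
            exact Bool.noConfusion hadj
          have hsr : s ≠ r := by
            rintro rfl
            exact hp12 (by rw [← hvs, ← hvr])
          refine Or.inl ⟨s, r, hs, hr, hsr, ?_⟩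
          rw [hvs, hvr]
        · rw [owner_i] at hei
          have hp1t : p.1 ∈ t := (hcVx p.1).1 hei
          obtain ⟨s, hs, hvs⟩ := hback p.1 hp1t
          refine Or.inr (Or.inl ⟨s, p.2, hs, ?_, ?_⟩) <;> rw [hvs]
          exact hp
        · rw [owner_o] at hei
          have hp2t : p.2 ∈ t := (hcVx p.2).1 hei
          obtain ⟨s, hs, hvs⟩ := hback p.2 hp2t
          refine Or.inr (Or.inr ⟨s, p.1, hs, ?_, ?_⟩) <;> rw [hvs]
          exact hp
      · intro hf
        rw [Finset.mem_filter]
        rcases hf with ⟨s, r, hs, hr, hsr, rfl⟩ | ⟨s, w, hs, hw', rfl⟩ | ⟨s, w, hs, hw', rfl⟩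
        · have hvst : pick3 w0 w1 w2 s ∈ t := hvtx_t s hs
          have hvrt : pick3 w0 w1 w2 r ∈ t := hvtx_t r hr
          have hvne : pick3 w0 w1 w2 s ≠ pick3 w0 w1 w2 r :=
            pick3_ne h01 h02 h12 hs hr hsr
          have hadj : adj (pick3 w0 w1 w2 s) (pick3 w0 w1 w2 r) = true :=
            hadjt _ hvst _ hvrt hvne
          have hnD : (pick3 w0 w1 w2 s, pick3 w0 w1 w2 r) ∉ D := by
            rw [hmemD]
            push_neg
            intro _
            rw [hTft _ hvst, hTft _ hvrt]
          constructor
          · exact Finset.mem_union_left _ (Finset.mem_union_left _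
              ((mem_bE n adj).2 ⟨_, hadj, hnD, rfl⟩))
          · rw [owner_b]
            exact (hcVx _).2 hvst
        · constructor
          · exact Finset.mem_union_left _ (Finset.mem_union_right _
              ((mem_iE n).2 ⟨_, hw', rfl⟩))
          · rw [owner_i]
            exact (hcVx _).2 (hvtx_t s hs)
        · constructor
          · exact Finset.mem_union_right _ ((mem_oE n).2 ⟨_, hw', rfl⟩)
          · rw [owner_o]
            exact (hcVx _).2 (hvtx_t s hs)
    have := component_iso n D w0 w1 w2
      ((HS n adj D).V.filter (fun v => cVdef n Tf P v = i))
      ((HS n adj D).E.filter (fun e => cVdef n Tf P (ownerdef n e) = i))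
      h01 h02 h12 hDsymm hVfeq hEfeq
    exact this

end Union

/-- a connected simple undirected graph of maximum degree at most
5 admits a partition into triangles iff its hypergraph encoding `⌜G⌝` is
generated by the bonding grammar `TBG`. -/
theorem trianglePartition_iff_TBG_generates (n : ℕ) (adj : Fin n → Fin n → Bool)
    (hsymm : ∀ u v, adj u v = adj v u) (hirr : ∀ v, adj v v = false)
    (hconn : ∀ u v : Fin n, Relation.ReflTransGen (fun a b : Fin n => adj a b = true) u v)
    (hdeg : ∀ v, (Finset.univ.filter (fun u => adj v u = true)).card ≤ 5) :
    TriPart adj ↔ BondingGrammar.Generates TBG (graphToHG n adj) := by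
  constructor
  · intro hTP
    obtain ⟨P, hP, huniq⟩ := hTP
    choose Tf hTf using huniq
    have hTmem : ∀ v, Tf v ∈ P ∧ v ∈ Tf v := fun v => (hTf v).1
    have hTuni : ∀ (v : Fin n) (t : Finset (Fin n)), t ∈ P → v ∈ t → t = Tf v :=
      fun v t ht hv => (hTf v).2 t ⟨ht, hv⟩
    refine ⟨HS n adj (Finset.univ.filter
      (fun p : Fin n × Fin n => adj p.1 p.2 = true ∧ Tf p.1 ≠ Tf p.2)), ?_, ?_⟩
    · exact forward_union n adj hsymm hirr hdeg Tf P hTmem hTuni hP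
    · rw [← HS_empty n adj]
      exact forward_chain n adj _ (fun p hp => ((Finset.mem_filter.1 hp).2).1)
  · exact reverse_dir n adj
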